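/- Let w be drawn uniformly from {−1,0,1}^k with k odd. Then the probability that ∑_{i=1}^k w_i = 0 is at least 1/(6√k). -/

import Mathlib

open Finset
open Finset
open scoped BigOperators Classical
lemma cb_sqrt : ∀ m : ℕ, 1 ≤ m → (4:ℝ)^m ≤ 2 * Real.sqrt m * (Nat.centralBinom m : ℝ) := by
  intro m
  induction m with
  | zero => intro h; omega
  | succ n ih =>
    intro _
    rcases Nat.eq_zero_or_pos n with h0 | hpos
    · subst h0
      simp [Nat.centralBinom]
      norm_num [Nat.choose]
    · have IH := ih hpos
      have hrec : ((n:ℝ)+1) * (Nat.centralBinom (n+1) : ℝ)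
          = 2 * (2*(n:ℝ)+1) * (Nat.centralBinom n : ℝ) := by
        have h := Nat.succ_mul_centralBinom_succ n
        have h2 : (((n+1) * Nat.centralBinom (n+1) : ℕ) : ℝ) = ((2 * (2*n+1) * Nat.centralBinom n : ℕ) : ℝ) := by
          exact congrArg (fun x : ℕ => (x:ℝ)) h
        push_cast at h2
        linarith
      have ha2 : Real.sqrt n ^ 2 = n := Real.sq_sqrt (by positivity)
      have hb2 : Real.sqrt ((n:ℝ)+1) ^ 2 = (n:ℝ)+1 := Real.sq_sqrt (by positivity)
      have ha0 : 0 ≤ Real.sqrt n := Real.sqrt_nonneg _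
      have hb0 : 0 ≤ Real.sqrt ((n:ℝ)+1) := Real.sqrt_nonneg _
      have hcb0 : (0:ℝ) < (Nat.centralBinom n : ℝ) := by

        exact_mod_cast Nat.centralBinom_pos n
      -- key: 2*(n+1)*sqrt n ≤ sqrt(n+1)*(2n+1)
      have key : 2*((n:ℝ)+1)*Real.sqrt n ≤ Real.sqrt ((n:ℝ)+1) * (2*(n:ℝ)+1) := by
        have e1 : (2*((n:ℝ)+1)*Real.sqrt n)^2 = 4*((n:ℝ)+1)^2*(n:ℝ) := by
          rw [mul_pow, ha2]; ring
        have e2 : (Real.sqrt ((n:ℝ)+1) * (2*(n:ℝ)+1))^2 = ((n:ℝ)+1)*(2*(n:ℝ)+1)^2 := by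
          rw [mul_pow, hb2]
        have h1 : (2*((n:ℝ)+1)*Real.sqrt n)^2 ≤ (Real.sqrt ((n:ℝ)+1) * (2*(n:ℝ)+1))^2 := by
          rw [e1, e2]; nlinarith [Nat.cast_nonneg (α := ℝ) n]
        have l0 : 0 ≤ 2*((n:ℝ)+1)*Real.sqrt n := by positivity
        have r0 : 0 ≤ Real.sqrt ((n:ℝ)+1) * (2*(n:ℝ)+1) := by positivity
        calc 2*((n:ℝ)+1)*Real.sqrt n = Real.sqrt ((2*((n:ℝ)+1)*Real.sqrt n)^2) := (Real.sqrt_sq l0).symm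
          _ ≤ Real.sqrt ((Real.sqrt ((n:ℝ)+1) * (2*(n:ℝ)+1))^2) := Real.sqrt_le_sqrt h1
          _ = Real.sqrt ((n:ℝ)+1) * (2*(n:ℝ)+1) := Real.sqrt_sq r0
      -- multiply target by (n+1) > 0
      have hn1 : (0:ℝ) < (n:ℝ)+1 := by positivity
      rw [← mul_le_mul_iff_of_pos_right hn1]
      push_cast
      calc (4:ℝ)^(n+1) * ((n:ℝ)+1) = 4*((n:ℝ)+1) * 4^n := by ring
        _ ≤ 4*((n:ℝ)+1) * (2 * Real.sqrt n * (Nat.centralBinom n : ℝ)) := by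
            apply mul_le_mul_of_nonneg_left IH (by positivity)
        _ = (2*((n:ℝ)+1)*Real.sqrt n) * (4 * (Nat.centralBinom n : ℝ)) := by ring
        _ ≤ (Real.sqrt ((n:ℝ)+1) * (2*(n:ℝ)+1)) * (4 * (Nat.centralBinom n : ℝ)) := by
            apply mul_le_mul_of_nonneg_right key (by positivity)
        _ = 2 * Real.sqrt ((n:ℝ)+1) * (2 * (2*(n:ℝ)+1) * (Nat.centralBinom n : ℝ)) := by ring
        _ = 2 * Real.sqrt ((n:ℝ)+1) * (((n:ℝ)+1) * (Nat.centralBinom (n+1) : ℝ)) := by rw [hrec]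
        _ = 2 * Real.sqrt ((n:ℝ)+1) * (Nat.centralBinom (n+1) : ℝ) * (((n:ℝ))+1) := by ring

lemma sum_pow_card (k : ℕ) (x : ℝ) :
    ∑ A : Finset (Fin k), x ^ A.card = (x + 1) ^ k := by
  have h := Finset.prod_add (fun _ : Fin k => x) (fun _ => (1:ℝ)) univ
  simp only [prod_const, one_pow, mul_one, Finset.powerset_univ, card_univ,
    Fintype.card_fin] at h
  exact h.symm

lemma even_sum (k : ℕ) (hk : Odd k) :
    ∑ A ∈ (univ : Finset (Finset (Fin k))).filter (fun A => Even A.card),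
      (2:ℝ) ^ A.card = (3 ^ k - 1) / 2 := by
  have h1 : (∑ A ∈ (univ : Finset (Finset (Fin k))).filter (fun A => Even A.card), (2:ℝ) ^ A.card)
      + (∑ A ∈ (univ : Finset (Finset (Fin k))).filter (fun A => ¬ Even A.card), (2:ℝ) ^ A.card)
      = 3 ^ k := by
    rw [Finset.sum_filter_add_sum_filter_not]
    have := sum_pow_card k 2
    norm_num at this
    exact this
  have h2 : (∑ A ∈ (univ : Finset (Finset (Fin k))).filter (fun A => Even A.card), (2:ℝ) ^ A.card)
      - (∑ A ∈ (univ : Finset (Finset (Fin k))).filter (fun A => ¬ Even A.card), (2:ℝ) ^ A.card)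
      = -1 := by
    have hneg := sum_pow_card k (-2)
    norm_num at hneg
    rw [Odd.neg_one_pow hk] at hneg
    rw [← hneg, ← Finset.sum_filter_add_sum_filter_not (univ : Finset (Finset (Fin k)))
      (fun A => Even A.card) (fun A => (-2:ℝ) ^ A.card)]
    have e1 : ∑ A ∈ (univ : Finset (Finset (Fin k))).filter (fun A => Even A.card),
        (-2:ℝ) ^ A.card = ∑ A ∈ (univ : Finset (Finset (Fin k))).filter (fun A => Even A.card),
        (2:ℝ) ^ A.card := by
      apply Finset.sum_congr rfl
      intro A hA
      rw [mem_filter] at hA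
      exact hA.2.neg_pow 2
    have e2 : ∑ A ∈ (univ : Finset (Finset (Fin k))).filter (fun A => ¬ Even A.card),
        (-2:ℝ) ^ A.card = -∑ A ∈ (univ : Finset (Finset (Fin k))).filter (fun A => ¬ Even A.card),
        (2:ℝ) ^ A.card := by
      rw [← Finset.sum_neg_distrib]
      apply Finset.sum_congr rfl
      intro A hA
      rw [mem_filter] at hA
      exact (Nat.not_even_iff_odd.mp hA.2).neg_pow 2
    rw [e1, e2]; ring
  linarith

lemma counting (k : ℕ) :
    ∑ A ∈ (univ : Finset (Finset (Fin k))).filter (fun A => Even A.card),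
      ((A.card.choose (A.card / 2) : ℝ)) ≤
    ((Finset.univ.filter (fun w : Fin k → Fin 3 =>
        ∑ i, ((w i : ℝ) - 1) = 0)).card : ℝ) := by
  set T := ((univ : Finset (Finset (Fin k))).filter (fun A => Even A.card)).sigma
      (fun A => A.powersetCard (A.card / 2)) with hT
  have hcardT : (T.card : ℝ) = ∑ A ∈ (univ : Finset (Finset (Fin k))).filter
      (fun A => Even A.card), ((A.card.choose (A.card / 2) : ℝ)) := by
    rw [hT, Finset.card_sigma]
    push_cast
    apply Finset.sum_congr rfl
    intro A _
    rw [Finset.card_powersetCard]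
  rw [← hcardT]
  have hle : T.card ≤ (Finset.univ.filter (fun w : Fin k → Fin 3 =>
      ∑ i, ((w i : ℝ) - 1) = 0)).card := by
    apply Finset.card_le_card_of_injOn
      (fun p i => if i ∈ p.2 then (2 : Fin 3) else if i ∈ p.1 then 0 else 1)
    · -- maps to
      rintro ⟨A, B⟩ hp
      simp only [hT, Finset.mem_sigma, mem_filter, mem_univ, true_and,
        Finset.mem_coe, Finset.mem_powersetCard] at hp
      obtain ⟨hev, hBA, hBcard⟩ := hp
      simp only [Finset.mem_coe, mem_filter, mem_univ, true_and]
      have hval : ∀ i, (((if i ∈ B then (2 : Fin 3) else if i ∈ A then 0 else 1) : Fin 3) : ℝ) - 1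
          = (if i ∈ B then (1:ℝ) else 0) * 2 - (if i ∈ A then (1:ℝ) else 0) := by
        intro i
        by_cases hB : i ∈ B
        · have hA : i ∈ A := hBA hB
          simp [hB, hA]
        · by_cases hA : i ∈ A <;> simp [hB, hA]
      rw [Finset.sum_congr rfl (fun i _ => hval i)]
      rw [Finset.sum_sub_distrib, ← Finset.sum_mul]
      simp only [Finset.sum_boole]
      rw [Finset.filter_mem_eq_inter, Finset.filter_mem_eq_inter]
      simp only [Finset.univ_inter]
      obtain ⟨m, hm⟩ := hev
      have : B.card = m := by omega
      rw [this, hm]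
      push_cast
      ring
    · -- injective
      rintro ⟨A, B⟩ hp ⟨A', B'⟩ hp' heq
      simp only [hT, Finset.mem_sigma, mem_filter, mem_univ, true_and,
        Finset.mem_coe, Finset.mem_powersetCard] at hp hp'
      have hBA := hp.2.1
      have hBA' := hp'.2.1
      have hfun : ∀ i, (if i ∈ B then (2 : Fin 3) else if i ∈ A then 0 else 1)
          = (if i ∈ B' then (2 : Fin 3) else if i ∈ A' then 0 else 1) := fun i =>
        congrFun heq i
      have hBeq : B = B' := by
        ext i
        have := hfun i
        by_cases h1 : i ∈ B <;> by_cases h2 : i ∈ B' <;>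
          simp [h1, h2] at this ⊢ <;>
          · by_cases h3 : i ∈ A <;> by_cases h4 : i ∈ A' <;> simp [h3, h4] at this <;> tauto
      have hAeq : A = A' := by
        ext i
        have := hfun i
        by_cases h1 : i ∈ B <;> by_cases h2 : i ∈ B'
        · exact ⟨fun _ => hBA' (hBeq ▸ h1), fun _ => hBA h1⟩
        · exact absurd (hBeq ▸ h1) h2
        · exact absurd (hBeq ▸ h2) h1
        · simp [h1, h2] at this
          by_cases h3 : i ∈ A <;> by_cases h4 : i ∈ A' <;> simp [h3, h4] at this <;> tauto
      subst hAeq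
      subst hBeq
      rfl
  exact_mod_cast hle

/-- For `w` uniform in `{-1,0,1}^k` (encoded as `Fin k → Fin 3` via `t ↦ t - 1`) with `k` odd,
the probability that `∑ w_i = 0` is at least `1/(6√k)`. -/
theorem stmt_8 (k : ℕ) (hk : Odd k) :
    (1 / (6 * Real.sqrt k)) * 3 ^ k ≤
      ((Finset.univ.filter (fun w : Fin k → Fin 3 =>
        ∑ i, ((w i : ℝ) - 1) = 0)).card : ℝ) := by
  have hk1 : 1 ≤ k := hk.pos
  have hks : (1:ℝ) ≤ Real.sqrt k := by
    rw [show (1:ℝ) = Real.sqrt 1 from (Real.sqrt_one).symm]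
    exact Real.sqrt_le_sqrt (by exact_mod_cast hk1)
  have hksp : (0:ℝ) < Real.sqrt k := lt_of_lt_of_le one_pos hks
  have hterm : ∀ A ∈ (univ : Finset (Finset (Fin k))).filter (fun A => Even A.card),
      (2:ℝ) ^ A.card * (1 / (2 * Real.sqrt k)) ≤ (A.card.choose (A.card / 2) : ℝ) := by
    intro A hA
    rw [mem_filter] at hA
    obtain ⟨m, hm⟩ := hA.2
    have hj2 : A.card / 2 = m := by omega
    have hA2m : A.card = 2 * m := by omega
    rcases Nat.eq_zero_or_pos m with h0 | hmpos
    · subst h0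
      simp only [hj2, hA2m]
      norm_num
      rw [inv_mul_le_iff₀ hksp]
      linarith
    · have hmk : (m:ℝ) ≤ k := by
        have : A.card ≤ k := by
          simpa using Finset.card_le_card (Finset.subset_univ A)
        exact_mod_cast by omega
      have hcb := cb_sqrt m hmpos
      have hsm : Real.sqrt m ≤ Real.sqrt k := Real.sqrt_le_sqrt hmk
      have hch : (Nat.centralBinom m : ℝ) = (A.card.choose (A.card / 2) : ℝ) := by
        rw [hj2, hA2m, Nat.centralBinom_eq_two_mul_choose]
      have h4 : (2:ℝ) ^ A.card = 4 ^ m := by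
        rw [hA2m, pow_mul]; norm_num
      have hcbpos : (0:ℝ) < (Nat.centralBinom m : ℝ) := by
        exact_mod_cast Nat.centralBinom_pos m
      rw [h4, ← hch]
      rw [mul_one_div, div_le_iff₀ (by positivity)]
      calc (4:ℝ)^m ≤ 2 * Real.sqrt m * (Nat.centralBinom m : ℝ) := hcb
        _ ≤ 2 * Real.sqrt k * (Nat.centralBinom m : ℝ) := by
            apply mul_le_mul_of_nonneg_right _ (le_of_lt hcbpos)
            linarith
        _ = (Nat.centralBinom m : ℝ) * (2 * Real.sqrt k) := by ring
  have hsum := Finset.sum_le_sum hterm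
  rw [← Finset.sum_mul, even_sum k hk] at hsum
  have hfinal := le_trans hsum (counting k)
  have h3k : (3:ℝ) ≤ 3 ^ k := by
    calc (3:ℝ) = 3 ^ 1 := (pow_one 3).symm
      _ ≤ 3 ^ k := pow_le_pow_right₀ (by norm_num) hk1
  have key : (1 / (6 * Real.sqrt k)) * 3 ^ k ≤ (3 ^ k - 1) / 2 * (1 / (2 * Real.sqrt k)) := by
    have e1 : (1 / (6 * Real.sqrt k)) * 3 ^ k = (3:ℝ)^k / (6 * Real.sqrt k) := by ring
    have e2 : ((3:ℝ) ^ k - 1) / 2 * (1 / (2 * Real.sqrt k)) = ((3:ℝ)^k - 1) / (4 * Real.sqrt k) := by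
      rw [div_mul_div_comm, mul_one, show (2:ℝ)*(2*Real.sqrt k) = 4*Real.sqrt k from by ring]
    rw [e1, e2, div_le_div_iff₀ (by positivity) (by positivity)]
    nlinarith [hksp, h3k, mul_nonneg (by linarith : (0:ℝ) ≤ (3:ℝ)^k - 3) hksp.le]
  linarith
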